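/- Every smooth solution N : Ω → ℝ of the static KID system on the open half-space Ω = ℝ^{n-1} × (0,∞) is a linear combination of the n+1 functions V_(0)(w,z) = (|w|^2+z^2+1)/(2z), V_(n)(w,z) = (|w|^2+z^2−1)/(2z), and V_(k)(w,z) = w^k/z for 1 ≤ k ≤ n−1; that is, there exist real constants a_0, a_n, a_1, …, a_{n-1} such that N = a_0 V_(0) + a_n V_(n) + Σ_{k=1}^{n-1} a_k V_(k) on Ω. -/

import Mathlib

/-- The open half-space `Ω = ℝ^k × (0,∞)`, points written `p = (w, z)` with `z = p.2 > 0`. -/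
def halfSpace (k : ℕ) : Set ((Fin k → ℝ) × ℝ) := {p | 0 < p.2}

/-- Partial derivative `∂_z F` with respect to the last coordinate `z`. -/
noncomputable def pdz {k : ℕ} (F : ((Fin k → ℝ) × ℝ) → ℝ) (p : (Fin k → ℝ) × ℝ) : ℝ :=
  fderiv ℝ F p (0, 1)

/-- Partial derivative `∂_i F` with respect to the coordinate `w^i`. -/
noncomputable def pdw {k : ℕ} (i : Fin k) (F : ((Fin k → ℝ) × ℝ) → ℝ)
    (p : (Fin k → ℝ) × ℝ) : ℝ :=
  fderiv ℝ F p (Pi.single i 1, 0)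

/-- The static KID system at a point `p = (w,z)`:
`∂_z² N + z⁻¹ ∂_z N − z⁻² N = 0`, `∂_z ∂_i N + z⁻¹ ∂_i N = 0`,
`∂_i ∂_j N − (z⁻¹ ∂_z N + z⁻² N) δ_ij = 0`. -/
def IsStaticKID {k : ℕ} (N : ((Fin k → ℝ) × ℝ) → ℝ) (p : (Fin k → ℝ) × ℝ) : Prop :=
  pdz (pdz N) p + p.2⁻¹ * pdz N p - (p.2 ^ 2)⁻¹ * N p = 0 ∧
  (∀ i : Fin k, pdz (pdw i N) p + p.2⁻¹ * pdw i N p = 0) ∧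
  (∀ i j : Fin k, pdw i (pdw j N) p
      - (p.2⁻¹ * pdz N p + (p.2 ^ 2)⁻¹ * N p) * (if i = j then 1 else 0) = 0)



open Filter Topology

section Aux

variable {k : ℕ}

-- decomposition of a vector
private lemma vec_decomp (v : (Fin k → ℝ) × ℝ) :
    v = (∑ i, v.1 i • ((Pi.single i 1 : Fin k → ℝ), (0:ℝ)))
        + v.2 • ((0 : Fin k → ℝ), (1:ℝ)) := by
  rw [Prod.ext_iff]
  constructor
  · simp only [Prod.fst_add, Prod.fst_sum, Prod.smul_fst, Prod.smul_snd, smul_zero, add_zero]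
    ext j
    simp [Finset.sum_apply, Pi.single_apply]
  · simp [Prod.snd_sum]

private lemma clm_eq_zero (L : ((Fin k → ℝ) × ℝ) →L[ℝ] ℝ)
    (h1 : L ((0 : Fin k → ℝ), (1:ℝ)) = 0)
    (h2 : ∀ i, L ((Pi.single i 1 : Fin k → ℝ), (0:ℝ)) = 0) : L = 0 := by
  refine ContinuousLinearMap.ext fun v => ?_
  rw [ContinuousLinearMap.zero_apply]
  conv_lhs => rw [vec_decomp v]
  rw [map_add, map_sum, map_smul]
  simp only [h1, smul_zero, add_zero]
  refine Finset.sum_eq_zero fun x _ => ?_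
  rw [map_smul, h2, smul_zero]

private lemma pd_add {f g : ((Fin k → ℝ) × ℝ) → ℝ} {p v : ((Fin k → ℝ) × ℝ)}
    (hf : DifferentiableAt ℝ f p) (hg : DifferentiableAt ℝ g p) :
    fderiv ℝ (fun q => f q + g q) p v = fderiv ℝ f p v + fderiv ℝ g p v := by
  rw [fderiv_fun_add hf hg]; rfl

private lemma pd_sub {f g : ((Fin k → ℝ) × ℝ) → ℝ} {p v : ((Fin k → ℝ) × ℝ)}
    (hf : DifferentiableAt ℝ f p) (hg : DifferentiableAt ℝ g p) :
    fderiv ℝ (fun q => f q - g q) p v = fderiv ℝ f p v - fderiv ℝ g p v := by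
  rw [fderiv_fun_sub hf hg]; rfl

private lemma pd_mul {f g : ((Fin k → ℝ) × ℝ) → ℝ} {p v : ((Fin k → ℝ) × ℝ)}
    (hf : DifferentiableAt ℝ f p) (hg : DifferentiableAt ℝ g p) :
    fderiv ℝ (fun q => f q * g q) p v
      = fderiv ℝ f p v * g p + f p * fderiv ℝ g p v := by
  rw [fderiv_fun_mul hf hg]
  simp [mul_comm]
  ring

private lemma pd_const {p v : ((Fin k → ℝ) × ℝ)} (c : ℝ) :
    fderiv ℝ (fun _ => c) p v = 0 := by
  rw [fderiv_fun_const]; rfl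

private lemma pd_const_mul {f : ((Fin k → ℝ) × ℝ) → ℝ} {p v : ((Fin k → ℝ) × ℝ)}
    (hf : DifferentiableAt ℝ f p) (c : ℝ) :
    fderiv ℝ (fun q => c * f q) p v = c * fderiv ℝ f p v := by
  rw [fderiv_const_mul hf]; rfl

private lemma pd_sum {f : Fin k → ((Fin k → ℝ) × ℝ) → ℝ} {p v : ((Fin k → ℝ) × ℝ)}
    (hf : ∀ i, DifferentiableAt ℝ (f i) p) :
    fderiv ℝ (fun q => ∑ i, f i q) p v = ∑ i, fderiv ℝ (f i) p v := by
  rw [fderiv_fun_sum (fun i _ => hf i)]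
  simp

private lemma pd_snd {p v : ((Fin k → ℝ) × ℝ)} :
    fderiv ℝ (fun q : ((Fin k → ℝ) × ℝ) => q.2) p v = v.2 := by
  rw [fderiv_snd]; rfl

private lemma diff_snd {p : ((Fin k → ℝ) × ℝ)} :
    DifferentiableAt ℝ (fun q : ((Fin k → ℝ) × ℝ) => q.2) p :=
  differentiableAt_snd

private lemma hasFDeriv_fst (i : Fin k) (p : ((Fin k → ℝ) × ℝ)) :
    HasFDerivAt (fun q : ((Fin k → ℝ) × ℝ) => q.1 i)
      ((ContinuousLinearMap.proj i).comp
        (ContinuousLinearMap.fst ℝ (Fin k → ℝ) ℝ)) p :=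
  ((ContinuousLinearMap.proj i).comp
        (ContinuousLinearMap.fst ℝ (Fin k → ℝ) ℝ)).hasFDerivAt

private lemma pd_fst {p v : ((Fin k → ℝ) × ℝ)} (i : Fin k) :
    fderiv ℝ (fun q : ((Fin k → ℝ) × ℝ) => q.1 i) p v = v.1 i := by
  rw [(hasFDeriv_fst i p).fderiv]; rfl

private lemma diff_fst {p : ((Fin k → ℝ) × ℝ)} (i : Fin k) :
    DifferentiableAt ℝ (fun q : ((Fin k → ℝ) × ℝ) => q.1 i) p :=
  (hasFDeriv_fst i p).differentiableAt

private lemma hasFDeriv_inv_snd {p : ((Fin k → ℝ) × ℝ)} (hz : p.2 ≠ 0) :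
    HasFDerivAt (fun q : ((Fin k → ℝ) × ℝ) => q.2⁻¹)
      ((-(p.2 ^ 2)⁻¹) • ContinuousLinearMap.snd ℝ (Fin k → ℝ) ℝ) p :=
  (hasDerivAt_inv hz).comp_hasFDerivAt p hasFDerivAt_snd

private lemma pd_inv_snd {p v : ((Fin k → ℝ) × ℝ)} (hz : p.2 ≠ 0) :
    fderiv ℝ (fun q : ((Fin k → ℝ) × ℝ) => q.2⁻¹) p v = -(p.2 ^ 2)⁻¹ * v.2 := by
  rw [(hasFDeriv_inv_snd hz).fderiv]; rfl

private lemma diff_inv_snd {p : ((Fin k → ℝ) × ℝ)} (hz : p.2 ≠ 0) :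
    DifferentiableAt ℝ (fun q : ((Fin k → ℝ) × ℝ) => q.2⁻¹) p :=
  (hasFDeriv_inv_snd hz).differentiableAt

end Aux

section Aux2

variable {k : ℕ}

private lemma contDiffAt_pd {F : ((Fin k → ℝ) × ℝ) → ℝ} {p : ((Fin k → ℝ) × ℝ)}
    (h : ContDiffAt ℝ 2 F p) (v : (Fin k → ℝ) × ℝ) :
    ContDiffAt ℝ 1 (fun q => fderiv ℝ F q v) p :=
  (h.fderiv_right (by norm_num)).clm_apply contDiffAt_const

private lemma pd_symm {F : ((Fin k → ℝ) × ℝ) → ℝ} {p : ((Fin k → ℝ) × ℝ)}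
    {s : Set ((Fin k → ℝ) × ℝ)}
    (hs : IsOpen s) (hp : p ∈ s) (hF : ∀ q ∈ s, ContDiffAt ℝ 2 F q)
    (v w : (Fin k → ℝ) × ℝ) :
    fderiv ℝ (fun q => fderiv ℝ F q v) p w = fderiv ℝ (fun q => fderiv ℝ F q w) p v := by
  have h2 : HasFDerivAt (fderiv ℝ F) (fderiv ℝ (fderiv ℝ F) p) p :=
    (((hF p hp).fderiv_right (m := 1) (by norm_num)).differentiableAt one_ne_zero).hasFDerivAt
  have h1 : ∀ᶠ y in 𝓝 p, HasFDerivAt F (fderiv ℝ F y) y := by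
    filter_upwards [hs.mem_nhds hp] with q hq
    exact ((hF q hq).differentiableAt two_ne_zero).hasFDerivAt
  have hsym := second_derivative_symmetric_of_eventually h1 h2
  have ev : ∀ u : (Fin k → ℝ) × ℝ,
      fderiv ℝ (fun q => fderiv ℝ F q u) p
        = (ContinuousLinearMap.apply ℝ ℝ u).comp (fderiv ℝ (fderiv ℝ F) p) :=
    fun u => (((ContinuousLinearMap.apply ℝ ℝ u).hasFDerivAt).comp p h2).fderiv
  rw [ev v, ev w]
  exact hsym w v

private lemma diff_pd_of_contDiffAt {F : ((Fin k → ℝ) × ℝ) → ℝ} {p : ((Fin k → ℝ) × ℝ)}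
    (h : ContDiffAt ℝ 2 F p) (v : (Fin k → ℝ) × ℝ) :
    DifferentiableAt ℝ (fun q => fderiv ℝ F q v) p :=
  (contDiffAt_pd h v).differentiableAt one_ne_zero

private lemma const_on {F : ((Fin k → ℝ) × ℝ) → ℝ}
    (hd : ∀ q ∈ halfSpace k, DifferentiableAt ℝ F q)
    (hz : ∀ q ∈ halfSpace k, fderiv ℝ F q ((0 : Fin k → ℝ), (1:ℝ)) = 0)
    (hw : ∀ q ∈ halfSpace k, ∀ i, fderiv ℝ F q ((Pi.single i 1 : Fin k → ℝ), (0:ℝ)) = 0)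
    {p q : (Fin k → ℝ) × ℝ} (hp : p ∈ halfSpace k) (hq : q ∈ halfSpace k) : F p = F q := by
  have hconv : Convex ℝ (halfSpace k) :=
    convex_halfSpace_gt ⟨fun _ _ => rfl, fun _ _ => rfl⟩ 0
  have hopen : IsOpen (halfSpace k) := isOpen_lt continuous_const continuous_snd
  refine hconv.is_const_of_fderivWithin_eq_zero
    (fun x hx => (hd x hx).differentiableWithinAt) (fun x hx => ?_) hp hq
  rw [fderivWithin_of_mem_nhds (hopen.mem_nhds hx)]
  exact clm_eq_zero _ (hz x hx) (hw x hx)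

end Aux2

section Main

variable {k : ℕ}

private lemma key (N : ((Fin k → ℝ) × ℝ) → ℝ)
    (hsmooth : ContDiffOn ℝ (⊤ : ℕ∞) N (halfSpace k))
    (hkid : ∀ p ∈ halfSpace k, IsStaticKID N p) :
    ∃ (a₀ aₙ : ℝ) (a : Fin k → ℝ), ∀ p ∈ halfSpace k,
      N p = a₀ * (((∑ i, p.1 i ^ 2) + p.2 ^ 2 + 1) / (2 * p.2))
          + aₙ * (((∑ i, p.1 i ^ 2) + p.2 ^ 2 - 1) / (2 * p.2))
          + ∑ j, a j * (p.1 j / p.2) := by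
  have hopen : IsOpen (halfSpace k) := isOpen_lt continuous_const continuous_snd
  have hCN : ∀ p ∈ halfSpace k, ContDiffAt ℝ 2 N p := fun p hp =>
    (hsmooth.contDiffAt (hopen.mem_nhds hp)).of_le
      (by exact WithTop.coe_le_coe.mpr (le_top : (2:ℕ∞) ≤ ⊤))
  have hdN : ∀ p ∈ halfSpace k, DifferentiableAt ℝ N p :=
    fun p hp => (hCN p hp).differentiableAt two_ne_zero
  have hdz : ∀ p ∈ halfSpace k, DifferentiableAt ℝ (pdz N) p :=
    fun p hp => diff_pd_of_contDiffAt (hCN p hp) _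
  have hdw : ∀ (i : Fin k), ∀ p ∈ halfSpace k, DifferentiableAt ℝ (pdw i N) p :=
    fun i p hp => diff_pd_of_contDiffAt (hCN p hp) _
  -- the function G = z⁻¹ N + ∂_z N, constant on Ω
  set G : ((Fin k → ℝ) × ℝ) → ℝ := fun q => q.2⁻¹ * N q + pdz N q with hGdef
  have hdG : ∀ p ∈ halfSpace k, DifferentiableAt ℝ G p := fun p hp =>
    ((diff_inv_snd hp.ne').mul (hdN p hp)).add (hdz p hp)
  have pdG : ∀ p ∈ halfSpace k, ∀ v,
      fderiv ℝ G p v = (-(p.2 ^ 2)⁻¹ * v.2) * N p + p.2⁻¹ * fderiv ℝ N p v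
        + fderiv ℝ (pdz N) p v := by
    intro p hp v
    rw [hGdef]
    rw [pd_add ((diff_inv_snd hp.ne').fun_mul (hdN p hp)) (hdz p hp),
      pd_mul (diff_inv_snd hp.ne') (hdN p hp), pd_inv_snd hp.ne']
  have hGz : ∀ p ∈ halfSpace k, fderiv ℝ G p ((0 : Fin k → ℝ), (1:ℝ)) = 0 := by
    intro p hp
    have h1 := (hkid p hp).1
    rw [pdG p hp]
    have e1 : fderiv ℝ N p ((0 : Fin k → ℝ), (1:ℝ)) = pdz N p := rfl
    have e2 : fderiv ℝ (pdz N) p ((0 : Fin k → ℝ), (1:ℝ)) = pdz (pdz N) p := rfl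
    rw [e1, e2]
    simp only
    linarith [h1]
  have hGw : ∀ p ∈ halfSpace k, ∀ i,
      fderiv ℝ G p ((Pi.single i 1 : Fin k → ℝ), (0:ℝ)) = 0 := by
    intro p hp i
    have h2 := (hkid p hp).2.1 i
    rw [pdG p hp]
    have e1 : fderiv ℝ N p ((Pi.single i 1 : Fin k → ℝ), (0:ℝ)) = pdw i N p := rfl
    have e2 : fderiv ℝ (pdz N) p ((Pi.single i 1 : Fin k → ℝ), (0:ℝ))
        = pdz (pdw i N) p := by
      exact pd_symm hopen hp hCN _ _
    rw [e1, e2]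
    simp only
    linarith [h2]
  have hp₀ : (((0 : Fin k → ℝ), (1:ℝ)) : (Fin k → ℝ) × ℝ) ∈ halfSpace k := by
    show (0:ℝ) < 1; norm_num
  set p₀ : (Fin k → ℝ) × ℝ := ((0 : Fin k → ℝ), (1:ℝ)) with hp₀def
  obtain ⟨twoA, htwoA⟩ : ∃ x : ℝ, x = G p₀ := ⟨_, rfl⟩
  have hGconst : ∀ p ∈ halfSpace k, G p = twoA := by
    intro p hp
    rw [htwoA]
    exact const_on hdG hGz hGw hp hp₀
  -- constants
  obtain ⟨b, hbdef⟩ : ∃ b : Fin k → ℝ, b = fun i => pdw i N p₀ := ⟨_, rfl⟩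
  obtain ⟨α, hαdef⟩ : ∃ x : ℝ, x = twoA / 2 := ⟨_, rfl⟩
  obtain ⟨c, hcdef⟩ : ∃ x : ℝ, x = N p₀ - α := ⟨_, rfl⟩
  -- the functions Fᵢ = z ∂ᵢN − (2α wⁱ + bᵢ), constant (= 0) on Ω
  have hFi : ∀ (i : Fin k), ∀ p ∈ halfSpace k,
      p.2 * pdw i N p - (twoA * p.1 i + b i) = 0 := by
    intro i
    set Fi : ((Fin k → ℝ) × ℝ) → ℝ :=
      fun q => q.2 * pdw i N q - (twoA * q.1 i + b i) with hFidef
    have hdFi : ∀ p ∈ halfSpace k, DifferentiableAt ℝ Fi p := fun p hp =>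
      (diff_snd.mul (hdw i p hp)).sub
        (((differentiableAt_const twoA).mul (diff_fst i)).add (differentiableAt_const (b i)))
    have pdFi : ∀ p ∈ halfSpace k, ∀ v,
        fderiv ℝ Fi p v = (v.2 * pdw i N p + p.2 * fderiv ℝ (pdw i N) p v)
          - (twoA * v.1 i) := by
      intro p hp v
      rw [hFidef]
      rw [pd_sub (diff_snd.fun_mul (hdw i p hp))
        (((differentiableAt_const twoA).fun_mul (diff_fst i)).fun_add (differentiableAt_const (b i))),
        pd_mul diff_snd (hdw i p hp), pd_snd,
        pd_add ((differentiableAt_const twoA).fun_mul (diff_fst i)) (differentiableAt_const (b i)),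
        pd_mul (differentiableAt_const twoA) (diff_fst i), pd_const, pd_fst, pd_const]
      ring
    have hFiz : ∀ p ∈ halfSpace k, fderiv ℝ Fi p ((0 : Fin k → ℝ), (1:ℝ)) = 0 := by
      intro p hp
      have h2 := (hkid p hp).2.1 i
      rw [pdFi p hp]
      have e2 : fderiv ℝ (pdw i N) p ((0 : Fin k → ℝ), (1:ℝ)) = pdz (pdw i N) p := rfl
      rw [e2]
      have hz : p.2 ≠ 0 := hp.ne'
      have : pdz (pdw i N) p = -(p.2⁻¹ * pdw i N p) := by linarith
      rw [this]
      simp only [Pi.zero_apply]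
      field_simp
      ring
    have hFiw : ∀ p ∈ halfSpace k, ∀ j,
        fderiv ℝ Fi p ((Pi.single j 1 : Fin k → ℝ), (0:ℝ)) = 0 := by
      intro p hp j
      have h3 := (hkid p hp).2.2 j i
      have hG := hGconst p hp
      rw [pdFi p hp]
      have e2 : fderiv ℝ (pdw i N) p ((Pi.single j 1 : Fin k → ℝ), (0:ℝ))
          = pdw j (pdw i N) p := rfl
      rw [e2]
      have hz : p.2 ≠ 0 := hp.ne'
      have h3' : pdw j (pdw i N) p
          = (p.2⁻¹ * pdz N p + (p.2 ^ 2)⁻¹ * N p) * (if j = i then 1 else 0) := by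
        linarith
      have hGval : p.2⁻¹ * N p + pdz N p = twoA := hG
      simp only [Prod.fst, Prod.snd]
      rw [h3']
      have hsingle : (Pi.single j (1:ℝ) : Fin k → ℝ) i = if i = j then 1 else 0 :=
        Pi.single_apply j 1 i
      rw [hsingle]
      have hX : p.2 * (p.2⁻¹ * pdz N p + (p.2 ^ 2)⁻¹ * N p) = twoA := by
        rw [← hGval]; field_simp; ring
      have hIf : (if j = i then (1:ℝ) else 0) = (if i = j then 1 else 0) := by
        by_cases h : i = j
        · simp [h]
        · rw [if_neg (fun hh => h hh.symm), if_neg h]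
      rw [hIf]
      linear_combination (if i = j then (1:ℝ) else 0) * hX
    have hFi0 : Fi p₀ = 0 := by
      rw [hFidef, hp₀def]
      simp [hbdef, hp₀def]
    intro p hp
    have := const_on hdFi hFiz hFiw hp hp₀
    rw [hFi0] at this
    exact this
  -- the function K = z N − (α(|w|² + z²) + Σ bᵢwⁱ + c), constant (= 0) on Ω
  set K : ((Fin k → ℝ) × ℝ) → ℝ := fun q =>
    q.2 * N q - (α * ((∑ l, q.1 l * q.1 l) + q.2 * q.2) + (∑ l, b l * q.1 l) + c) with hKdef
  have dsum1 : ∀ p : (Fin k → ℝ) × ℝ,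
      DifferentiableAt ℝ (fun q : (Fin k → ℝ) × ℝ => ∑ l, q.1 l * q.1 l) p := by
    intro p
    exact DifferentiableAt.fun_sum (fun l _ => (diff_fst l).mul (diff_fst l))
  have dsum2 : ∀ p : (Fin k → ℝ) × ℝ,
      DifferentiableAt ℝ (fun q : (Fin k → ℝ) × ℝ => ∑ l, b l * q.1 l) p := by
    intro p
    exact DifferentiableAt.fun_sum (fun l _ => (differentiableAt_const (b l)).mul (diff_fst l))
  have dbig : ∀ p : (Fin k → ℝ) × ℝ, DifferentiableAt ℝ (fun q : (Fin k → ℝ) × ℝ =>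
      α * ((∑ l, q.1 l * q.1 l) + q.2 * q.2) + (∑ l, b l * q.1 l) + c) p := by
    intro p
    exact (((differentiableAt_const α).mul ((dsum1 p).add (diff_snd.mul diff_snd))).add
      (dsum2 p)).add (differentiableAt_const c)
  have hdK : ∀ p ∈ halfSpace k, DifferentiableAt ℝ K p := fun p hp =>
    (diff_snd.mul (hdN p hp)).sub (dbig p)
  have pdK : ∀ p ∈ halfSpace k, ∀ v,
      fderiv ℝ K p v = (v.2 * N p + p.2 * fderiv ℝ N p v)
        - (α * ((∑ l, (v.1 l * p.1 l + p.1 l * v.1 l)) + (v.2 * p.2 + p.2 * v.2))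
          + (∑ l, b l * v.1 l)) := by
    intro p hp v
    have e1 : fderiv ℝ (fun q : (Fin k → ℝ) × ℝ => ∑ l, q.1 l * q.1 l) p v
        = ∑ l, (v.1 l * p.1 l + p.1 l * v.1 l) := by
      rw [pd_sum (fun l => (diff_fst l).fun_mul (diff_fst l))]
      exact Finset.sum_congr rfl fun l _ => by
        rw [pd_mul (diff_fst l) (diff_fst l), pd_fst]
    have e2 : fderiv ℝ (fun q : (Fin k → ℝ) × ℝ => ∑ l, b l * q.1 l) p v
        = ∑ l, b l * v.1 l := by
      rw [pd_sum (fun l => (differentiableAt_const (b l)).fun_mul (diff_fst l))]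
      exact Finset.sum_congr rfl fun l _ => by
        rw [pd_const_mul (diff_fst l), pd_fst]
    rw [hKdef]
    rw [pd_sub (diff_snd.fun_mul (hdN p hp)) (dbig p),
      pd_mul diff_snd (hdN p hp), pd_snd,
      pd_add (((differentiableAt_const α).fun_mul ((dsum1 p).fun_add (diff_snd.fun_mul diff_snd))).fun_add
        (dsum2 p)) (differentiableAt_const c), pd_const,
      pd_add ((differentiableAt_const α).fun_mul ((dsum1 p).fun_add (diff_snd.fun_mul diff_snd))) (dsum2 p),
      pd_const_mul ((dsum1 p).fun_add (diff_snd.fun_mul diff_snd)),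
      pd_add (dsum1 p) (diff_snd.fun_mul diff_snd),
      pd_mul diff_snd diff_snd, pd_snd, e1, e2]
    ring
  have hKz : ∀ p ∈ halfSpace k, fderiv ℝ K p ((0 : Fin k → ℝ), (1:ℝ)) = 0 := by
    intro p hp
    rw [pdK p hp]
    have hGval : p.2⁻¹ * N p + pdz N p = twoA := hGconst p hp
    have e1 : fderiv ℝ N p ((0 : Fin k → ℝ), (1:ℝ)) = pdz N p := rfl
    rw [e1]
    have hz : p.2 ≠ 0 := hp.ne'
    simp only [Pi.zero_apply, zero_mul, mul_zero, add_zero, zero_add, Finset.sum_const_zero]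
    have hNp : N p = p.2 * (twoA - pdz N p) := by
      have : p.2⁻¹ * N p = twoA - pdz N p := by linarith
      field_simp at this
      linarith [this]
    rw [hNp, hαdef]
    ring
  have hKw : ∀ p ∈ halfSpace k, ∀ j,
      fderiv ℝ K p ((Pi.single j 1 : Fin k → ℝ), (0:ℝ)) = 0 := by
    intro p hp j
    rw [pdK p hp]
    have e1 : fderiv ℝ N p ((Pi.single j 1 : Fin k → ℝ), (0:ℝ)) = pdw j N p := rfl
    rw [e1]
    have hs1 : (∑ l, ((Pi.single j (1:ℝ) : Fin k → ℝ) l * p.1 l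
        + p.1 l * (Pi.single j (1:ℝ) : Fin k → ℝ) l)) = 2 * p.1 j := by
      have e : ∀ x : Fin k, (Pi.single j (1:ℝ) : Fin k → ℝ) x * p.1 x
          + p.1 x * (Pi.single j (1:ℝ) : Fin k → ℝ) x
          = if x = j then 2 * p.1 x else 0 := by
        intro x
        rcases eq_or_ne x j with h | h
        · subst h; simp [Pi.single_apply]; ring
        · simp [Pi.single_apply, h]
      rw [Finset.sum_congr rfl fun x _ => e x,
        Finset.sum_ite_eq' Finset.univ j (fun x => 2 * p.1 x)]
      simp
    have hs2 : (∑ l, b l * (Pi.single j (1:ℝ) : Fin k → ℝ) l) = b j := by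
      simp [Pi.single_apply]
    simp only [Prod.fst, Prod.snd]
    rw [hs1, hs2]
    have hF := hFi j p hp
    have : twoA = 2 * α := by rw [hαdef]; ring
    simp only [zero_mul, mul_zero, add_zero, zero_add]
    linear_combination hF + p.1 j * this
  have hK0 : K p₀ = 0 := by
    rw [hKdef, hp₀def]
    simp [hcdef, hp₀def]
  have hKconst : ∀ p ∈ halfSpace k, K p = 0 := by
    intro p hp
    have := const_on hdK hKz hKw hp hp₀
    rw [hK0] at this
    exact this
  -- conclusion
  refine ⟨α + c, α - c, b, ?_⟩
  intro p hp
  have hz : p.2 ≠ 0 := hp.ne'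
  have hKp := hKconst p hp
  rw [hKdef] at hKp
  simp only at hKp
  have hS : (∑ i, p.1 i ^ 2) = ∑ l, p.1 l * p.1 l := by
    exact Finset.sum_congr rfl fun l _ => sq (p.1 l)
  have hB : (∑ j, b j * (p.1 j / p.2)) = (∑ l, b l * p.1 l) / p.2 := by
    rw [Finset.sum_div]
    exact Finset.sum_congr rfl fun l _ => by ring
  rw [hS, hB]
  field_simp
  linear_combination 2 * hKp - 2 * α * hS

end Main

/-- Every smooth solution of the static KID system on the half-space `Ω = ℝ^{n-1} × (0,∞)`
is a linear combination of `V₀(w,z) = (|w|²+z²+1)/(2z)`, `V_(n)(w,z) = (|w|²+z²−1)/(2z)`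
and `V_(k)(w,z) = w^k/z`, `1 ≤ k ≤ n-1`. -/
theorem staticKID_basis (n : ℕ) (hn : 3 ≤ n) (N : ((Fin (n - 1) → ℝ) × ℝ) → ℝ)
    (hsmooth : ContDiffOn ℝ (⊤ : ℕ∞) N (halfSpace (n - 1)))
    (hkid : ∀ p ∈ halfSpace (n - 1), IsStaticKID N p) :
    ∃ (a₀ aₙ : ℝ) (a : Fin (n - 1) → ℝ), ∀ p ∈ halfSpace (n - 1),
      N p = a₀ * (((∑ i, p.1 i ^ 2) + p.2 ^ 2 + 1) / (2 * p.2))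
          + aₙ * (((∑ i, p.1 i ^ 2) + p.2 ^ 2 - 1) / (2 * p.2))
          + ∑ k, a k * (p.1 k / p.2) := by
  exact key N hsmooth hkid
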